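/- Let r: (-π/2, π/2) × ℝ → iso(2,1) ⊗ iso(2,1) be given by r_a(ψ,α) = ½(P_a⊗J^a + J^a⊗P_a) + ½ tan(ψ/2)(P_1∧J_2 - P_2∧J_1) + (α/(4cos²(ψ/2))) P_1∧P_2, where X∧Y := X⊗Y - Y⊗X. Then r_a is a classical dynamical r-matrix for the Cartan subalgebra h_a = span{J_0, P_0}: it is h_a-invariant and satisfies the classical dynamical Yang-Baxter equation [[r,r]] = x_1^{(1)}∂_ψ r_{23} - x_1^{(2)}∂_ψ r_{13} + x_1^{(3)}∂_ψ r_{12} + x_2^{(1)}∂_α r_{23} - x_2^{(2)}∂_α r_{13} + x_2^{(3)}∂_α r_{12} with x_1 = P_0, x_2 = J_0. -/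

import Mathlib

open Real BigOperators Finset

noncomputable section

/-- Vectors in ℝ³. -/
abbrev V3 : Type := Fin 3 → ℝ

/-- Minkowski metric η = diag(1,-1,-1). -/
def ηm : Fin 3 → ℝ := ![1, -1, -1]

/-- Totally antisymmetric symbol with ε₀₁₂ = 1. -/
def eps : Fin 3 → Fin 3 → Fin 3 → ℝ := fun a b c =>
  if (a, b, c) = ((0 : Fin 3), (1 : Fin 3), (2 : Fin 3)) ∨ (a, b, c) = (1, 2, 0) ∨ (a, b, c) = (2, 0, 1) then 1
  else if (a, b, c) = ((0 : Fin 3), (2 : Fin 3), (1 : Fin 3)) ∨ (a, b, c) = (2, 1, 0) ∨ (a, b, c) = (1, 0, 2) then -1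
  else 0

/-- An element of iso(2,1) is encoded by its J-coefficients and P-coefficients:
`(j, p)` represents `Σ j^a J_a + Σ p^a P_a`. -/
abbrev iso21 : Type := V3 × V3

def Jvec (x : V3) : iso21 := (x, 0)
def Pvec (x : V3) : iso21 := (0, x)
def Jb (a : Fin 3) : iso21 := Jvec (fun i => if i = a then 1 else 0)
def Pb (a : Fin 3) : iso21 := Pvec (fun i => if i = a then 1 else 0)

/-- The Lie bracket of iso(2,1): [J_a,J_b] = ε_{ab}^c J_c, [J_a,P_b] = ε_{ab}^c P_c,
[P_a,P_b] = 0, with ε_{ab}^c = η^{cc} ε_{abc}. -/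
def br (x y : iso21) : iso21 :=
  (fun c => ∑ a, ∑ b, x.1 a * y.1 b * (ηm c * eps a b c),
   fun c => ∑ a, ∑ b, (x.1 a * y.2 b + x.2 a * y.1 b) * (ηm c * eps a b c))

/-- The Ad-invariant pairing ⟨J_a,P_b⟩ = η_{ab}, ⟨J,J⟩ = ⟨P,P⟩ = 0. -/
def pairing (x y : iso21) : ℝ := ∑ a, ηm a * (x.1 a * y.2 a + x.2 a * y.1 a)

/-- Minkowski inner product on ℝ³. -/
def mdot (x y : V3) : ℝ := ∑ a, ηm a * x a * y a

/-- Lorentzian cross product (x∧y)^a = ε^{abc} x_b y_c. -/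
def crossL (x y : V3) : V3 := fun a => ηm a * ∑ b, ∑ c, eps a b c * x b * y c

/-- Index set of the basis {J_a, P_a}: `false` ↦ J, `true` ↦ P. -/
abbrev Bas : Type := Bool × Fin 3

def basis : Bas → iso21 := fun p => if p.1 then Pb p.2 else Jb p.2
def coeff (x : iso21) (p : Bas) : ℝ := if p.1 then x.2 p.2 else x.1 p.2

/-- 2-tensors and 3-tensors over iso(2,1), given by their coefficients in the basis. -/
abbrev TT2 : Type := Bas → Bas → ℝ
abbrev TT3 : Type := Bas → Bas → Bas → ℝ

def tens (x y : iso21) : TT2 := fun μ ν => coeff x μ * coeff y ν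

/-- Structure constants: coefficient of `[T_a, T_c]` on `T_m`. -/
def Cstr (a c m : Bas) : ℝ := coeff (br (basis a) (basis c)) m

/-- The mixed Yang-Baxter expression [[r,s]] = [r₁₂,s₁₃] + [r₁₂,s₂₃] + [r₁₃,s₂₃]. -/
def YB2 (r s : TT2) : TT3 := fun μ ν lam =>
    (∑ a, ∑ c, r a ν * s c lam * Cstr a c μ)
  + (∑ b, ∑ c, r μ b * s c lam * Cstr b c ν)
  + (∑ b, ∑ d, r μ b * s ν d * Cstr b d lam)

/-- The action of X on a 2-tensor: [X⊗1 + 1⊗X, r]. -/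
def act2 (x : iso21) (r : TT2) : TT2 := fun μ ν =>
  (∑ a, r a ν * coeff (br x (basis a)) μ) + (∑ b, r μ b * coeff (br x (basis b)) ν)

/-- The classical r-matrix r = P_a ⊗ J^a. -/
def rPJ : TT2 := fun μ ν => ∑ a, ηm a * tens (Pb a) (Jb a) μ ν

/-- The symmetric part r_S = ½(P_a⊗J^a + J^a⊗P_a). -/
def rSym : TT2 := fun μ ν => (1/2) * ∑ a, ηm a * (tens (Pb a) (Jb a) μ ν + tens (Jb a) (Pb a) μ ν)

/-- The classical dynamical Yang-Baxter equation at (ψ,α) with dynamical elements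
x₁ (paired with ψ) and x₂ (paired with α). -/
def CDYBEat (r : ℝ → ℝ → TT2) (x1 x2 : ℝ → ℝ → iso21) (ψ α : ℝ) : Prop :=
  ∀ μ ν lam : Bas, YB2 (r ψ α) (r ψ α) μ ν lam =
      coeff (x1 ψ α) μ * deriv (fun s => r s α ν lam) ψ
    - coeff (x1 ψ α) ν * deriv (fun s => r s α μ lam) ψ
    + coeff (x1 ψ α) lam * deriv (fun s => r s α μ ν) ψ
    + coeff (x2 ψ α) μ * deriv (fun s => r ψ s ν lam) α
    - coeff (x2 ψ α) ν * deriv (fun s => r ψ s μ lam) α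
    + coeff (x2 ψ α) lam * deriv (fun s => r ψ s μ ν) α

/-- Adjoint action of a Lorentz matrix g on iso(2,1). -/
def adL (g : Matrix (Fin 3) (Fin 3) ℝ) (x : iso21) : iso21 := (g.mulVec x.1, g.mulVec x.2)

/-- Adjoint action of a translation t on iso(2,1): J_a ↦ J_a + ε_{ab}^c t^b P_c, P_a ↦ P_a. -/
def adT (t : V3) (x : iso21) : iso21 :=
  (x.1, fun c => x.2 c + ∑ a, ∑ b, x.1 a * t b * (ηm c * eps a b c))

/-- The proper orthochronous Lorentz group SO⁺(2,1) as 3×3 matrices. -/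
def SOplus : Set (Matrix (Fin 3) (Fin 3) ℝ) :=
  {g | g.transpose * Matrix.diagonal ηm * g = Matrix.diagonal ηm ∧ g.det = 1 ∧ 0 < g 0 0}

/-- The induced action of a linear map on 2-tensors, A⊗A. -/
def Ad2 (A : iso21 → iso21) (r : TT2) : TT2 :=
  fun μ ν => ∑ a : Bas, ∑ b : Bas, r a b * coeff (A (basis a)) μ * coeff (A (basis b)) ν

/-- r(ψ,α) = P_a⊗J^a - V^{bc}(ψ)(P_b⊗J_c - J_c⊗P_b) + ε^{bcd} m_d(ψ,α) P_b⊗P_c. -/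
def rVm (V : ℝ → Matrix (Fin 3) (Fin 3) ℝ) (m : ℝ → ℝ → V3) (ψ α : ℝ) : TT2 := fun μ ν =>
  rPJ μ ν
  - (∑ b, ∑ c, V ψ b c * (tens (Pb b) (Jb c) μ ν - tens (Jb c) (Pb b) μ ν))
  + ∑ b, ∑ c, ∑ d, ηm b * ηm c * eps b c d * m ψ α d * tens (Pb b) (Pb c) μ ν

/-- The vector w defined by ε^{abc} w_c = V^{ab} - V^{ba}. -/
def wOf (V : ℝ → Matrix (Fin 3) (Fin 3) ℝ) (ψ : ℝ) : V3 := fun c =>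
  (1/2) * ∑ a, ∑ b, ηm a * ηm b * eps a b c * (V ψ a b - V ψ b a)

/-- CDYBE condition (i) at (ψ,α), componentwise in (a,b,c). -/
def Cond1At (V : ℝ → Matrix (Fin 3) (Fin 3) ℝ) (m : ℝ → ℝ → V3) (qψ qα : ℝ → V3)
    (ψ α : ℝ) : Prop :=
  ∀ a b c : Fin 3,
    qα ψ a * (∑ d, ηm b * ηm c * eps b c d * deriv (fun s => m ψ s d) α)
    - qψ ψ b * deriv (fun s => V s c a) ψ
    + qψ ψ c * deriv (fun s => V s b a) ψ
    - (∑ d, ∑ g, V ψ b d * V ψ c g * (ηm a * eps d g a))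
    - (∑ d, ∑ g, V ψ d a * V ψ c g * (ηm b * eps d g b))
    + (∑ d, ∑ g, V ψ d a * V ψ b g * (ηm c * eps d g c))
    - (∑ d, V ψ d a * (ηm b * ηm c * eps b c d)) = 0

/-- CDYBE condition (ii) at (ψ,α): q_ψ·∂_ψ m + q_θ·∂_α m + w·m = 0. -/
def Cond2At (V : ℝ → Matrix (Fin 3) (Fin 3) ℝ) (m : ℝ → ℝ → V3) (qψ : ℝ → V3)
    (qθ : ℝ → ℝ → V3) (ψ α : ℝ) : Prop :=
  mdot (qψ ψ) (fun a => deriv (fun s => m s α a) ψ)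
  + mdot (qθ ψ α) (fun a => deriv (fun s => m ψ s a) α)
  + mdot (wOf V ψ) (m ψ α) = 0

def wedgeT (x y : iso21) : TT2 := fun μ ν => tens x y μ ν - tens y x μ ν

/-- The standard dynamical r-matrix for the Cartan subalgebra span{J₀,P₀}. -/
def ra (ψ α : ℝ) : TT2 := fun μ ν =>
  rSym μ ν + (1/2) * Real.tan (ψ/2) * (wedgeT (Pb 1) (Jb 2) μ ν - wedgeT (Pb 2) (Jb 1) μ ν)
  + α / (4 * (Real.cos (ψ/2))^2) * wedgeT (Pb 1) (Pb 2) μ ν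

/-- The standard dynamical r-matrix for the Cartan subalgebra span{J₁,P₁}. -/
def rb (ψ α : ℝ) : TT2 := fun μ ν =>
  rSym μ ν + (1/2) * Real.tanh (ψ/2) * (wedgeT (Pb 2) (Jb 0) μ ν - wedgeT (Pb 0) (Jb 2) μ ν)
  + α / (4 * (Real.cosh (ψ/2))^2) * wedgeT (Pb 2) (Pb 0) μ ν

/-- r_a(ψ,α) = ½(P_a⊗J^a + J^a⊗P_a) + ½tan(ψ/2)(P₁∧J₂ - P₂∧J₁)
+ (α/(4cos²(ψ/2))) P₁∧P₂ is a classical dynamical r-matrix for h_a = span{J₀,P₀}: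
it is h_a-invariant and satisfies the CDYBE with x₁ = P₀, x₂ = J₀. -/

def Awedge : TT2 := fun μ ν => wedgeT (Pb 1) (Jb 2) μ ν - wedgeT (Pb 2) (Jb 1) μ ν
def Bw : TT2 := fun μ ν => wedgeT (Pb 1) (Pb 2) μ ν
def Rgen (t u : ℝ) : TT2 := fun μ ν => rSym μ ν + (1/2)*t* Awedge μ ν + u * Bw μ ν

lemma Rgen_val (t u : ℝ) (p q : Bool) (i j : Fin 3) :
    Rgen t u (p,i) (q,j) =
      (if i = j ∧ p ≠ q then (1/2) * ηm i else 0)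
      + (1/2)*t*( (if p = true ∧ q = false ∧ i = 1 ∧ j = 2 then 1 else 0)
                - (if p = false ∧ q = true ∧ i = 2 ∧ j = 1 then 1 else 0)
                - (if p = true ∧ q = false ∧ i = 2 ∧ j = 1 then 1 else 0)
                + (if p = false ∧ q = true ∧ i = 1 ∧ j = 2 then 1 else 0) )
      + u*( (if p = true ∧ q = true ∧ i = 1 ∧ j = 2 then 1 else 0)
          - (if p = true ∧ q = true ∧ i = 2 ∧ j = 1 then 1 else 0) ) := by
  cases p <;> cases q <;> fin_cases i <;> fin_cases j <;>
    norm_num [Rgen, rSym, Awedge, Bw, wedgeT, tens, coeff, Jb, Pb, Jvec, Pvec,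
      Fin.sum_univ_three, ηm, Fin.ext_iff] <;> simp

lemma Cstr_val (p q s : Bool) (i j k : Fin 3) :
    Cstr (p,i) (q,j) (s,k) = if s = (p || q) ∧ ¬(p = true ∧ q = true) then ηm k * eps i j k else 0 := by
  cases p <;> cases q <;> cases s <;>
    simp [Cstr, basis, br, coeff, Jb, Pb, Jvec, Pvec, Fin.sum_univ_three] <;>
    fin_cases i <;> fin_cases j <;> norm_num

lemma eps_apply (i j k : Fin 3) : eps i j k =
  (if i = 0 ∧ j = 1 ∧ k = 2 then 1 else 0) + (if i = 1 ∧ j = 2 ∧ k = 0 then 1 else 0)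
  + (if i = 2 ∧ j = 0 ∧ k = 1 then 1 else 0) - (if i = 0 ∧ j = 2 ∧ k = 1 then 1 else 0)
  - (if i = 2 ∧ j = 1 ∧ k = 0 then 1 else 0) - (if i = 1 ∧ j = 0 ∧ k = 2 then 1 else 0) := by
  fin_cases i <;> fin_cases j <;> fin_cases k <;> simp [eps, Prod.ext_iff]

lemma ηm_apply (i : Fin 3) : ηm i = if i = 0 then 1 else -1 := by
  fin_cases i <;> simp [ηm]

def DpsiR (t α : ℝ) : TT2 := fun μ ν => (1+t^2)/4 * Awedge μ ν + α*t*(1+t^2)/4 * Bw μ ν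
def DalR (t : ℝ) : TT2 := fun μ ν => (1+t^2)/4 * Bw μ ν

set_option maxHeartbeats 4000000 in
lemma core (t α : ℝ) (μ ν lam : Bas) :
  YB2 (Rgen t (α*(1+t^2)/4)) (Rgen t (α*(1+t^2)/4)) μ ν lam =
    coeff (Pb 0) μ * DpsiR t α ν lam - coeff (Pb 0) ν * DpsiR t α μ lam
  + coeff (Pb 0) lam * DpsiR t α μ ν
  + coeff (Jb 0) μ * DalR t ν lam - coeff (Jb 0) ν * DalR t μ lam
  + coeff (Jb 0) lam * DalR t μ ν := by
  obtain ⟨p, i⟩ := μ; obtain ⟨q, j⟩ := ν; obtain ⟨s, k⟩ := lam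
  cases p <;> cases q <;> cases s <;>
  · simp only [YB2, DpsiR, DalR, Fintype.sum_prod_type, Fintype.sum_bool, Fin.sum_univ_three,
      Cstr_val, Rgen_val, Awedge, Bw, wedgeT, tens, coeff, Jb, Pb, Jvec, Pvec, eps_apply, ηm_apply]
    norm_num
    all_goals fin_cases i <;> fin_cases j <;> fin_cases k <;> simp [Prod.ext_iff] <;> ring

lemma ra_eq (s β : ℝ) : ra s β = Rgen (Real.tan (s/2)) (β/(4*(Real.cos (s/2))^2)) := rfl

set_option maxHeartbeats 2000000 in
lemma act2_gen (a b t u : ℝ) : act2 (a • Jb 0 + b • Pb 0) (Rgen t u) = 0 := by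
  funext μ ν
  obtain ⟨p, i⟩ := μ; obtain ⟨q, j⟩ := ν
  cases p <;> cases q <;>
  · simp only [act2, Fintype.sum_prod_type, Fintype.sum_bool, Fin.sum_univ_three, Rgen_val,
      br, basis, coeff, Jb, Pb, Jvec, Pvec, eps_apply, ηm_apply, Prod.smul_def, Prod.mk_add_mk,
      Pi.add_apply, Pi.smul_apply, smul_eq_mul, Prod.fst, Prod.snd]
    norm_num
    all_goals fin_cases i <;> fin_cases j <;> simp [Prod.ext_iff] <;> ring

lemma one_add_tan_sq' {x : ℝ} (hc : Real.cos x ≠ 0) :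
    (1:ℝ) + Real.tan x ^ 2 = (Real.cos x ^ 2)⁻¹ := by
  rw [← Real.inv_one_add_tan_sq hc, inv_inv]

lemma deriv_psi (ψ α : ℝ) (hc : Real.cos (ψ/2) ≠ 0) (μ ν : Bas) :
    deriv (fun s => ra s α μ ν) ψ = DpsiR (Real.tan (ψ/2)) α μ ν := by
  have hhalf : HasDerivAt (fun s : ℝ => s / 2) (1/2) ψ := (hasDerivAt_id ψ).div_const 2
  have htan : HasDerivAt (fun s => Real.tan (s/2)) (1 / Real.cos (ψ/2) ^ 2 * (1/2)) ψ :=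
    (Real.hasDerivAt_tan hc).comp (h := fun s : ℝ => s / 2) ψ hhalf
  have hcos : HasDerivAt (fun s => Real.cos (s/2)) (-Real.sin (ψ/2) * (1/2)) ψ :=
    (Real.hasDerivAt_cos (ψ/2)).comp (h := fun s : ℝ => s / 2) ψ hhalf
  have hden : HasDerivAt (fun s => 4 * Real.cos (s/2)^2)
      (4 * (((2:ℕ):ℝ) * Real.cos (ψ/2) ^ 1 * (-Real.sin (ψ/2) * (1/2)))) ψ :=
    (hcos.pow 2).const_mul 4
  have hden0 : 4 * Real.cos (ψ/2)^2 ≠ 0 := by positivity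
  have hfrac : HasDerivAt (fun s => α / (4 * Real.cos (s/2)^2))
      ((0 * (4 * Real.cos (ψ/2)^2) - α * (4 * (((2:ℕ):ℝ) * Real.cos (ψ/2) ^ 1 * (-Real.sin (ψ/2) * (1/2)))))
        / (4 * Real.cos (ψ/2)^2)^2) ψ :=
    (hasDerivAt_const ψ α).div hden hden0
  have htot : HasDerivAt (fun s => ra s α μ ν)
      (0 + 1/2 * (1 / Real.cos (ψ/2) ^ 2 * (1/2)) * Awedge μ ν
        + ((0 * (4 * Real.cos (ψ/2)^2) - α * (4 * (((2:ℕ):ℝ) * Real.cos (ψ/2) ^ 1 * (-Real.sin (ψ/2) * (1/2)))))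
          / (4 * Real.cos (ψ/2)^2)^2) * Bw μ ν) ψ := by
    have e : (fun s => ra s α μ ν)
        = fun s => rSym μ ν + 1/2 * Real.tan (s/2) * Awedge μ ν
            + (α / (4 * Real.cos (s/2)^2)) * Bw μ ν := rfl
    rw [e]
    exact ((hasDerivAt_const ψ (rSym μ ν)).add ((htan.const_mul (1/2)).mul_const _)).add
      (hfrac.mul_const _)
  rw [htot.deriv, DpsiR]
  have hs : Real.sin (ψ/2) = Real.tan (ψ/2) * Real.cos (ψ/2) := by
    rw [Real.tan_eq_sin_div_cos]; field_simp
  rw [hs, one_add_tan_sq' hc]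
  field_simp
  ring

lemma deriv_alpha (ψ α : ℝ) (hc : Real.cos (ψ/2) ≠ 0) (μ ν : Bas) :
    deriv (fun s => ra ψ s μ ν) α = DalR (Real.tan (ψ/2)) μ ν := by
  have hden0 : (4:ℝ) * Real.cos (ψ/2)^2 ≠ 0 := by positivity
  have htot : HasDerivAt (fun s => ra ψ s μ ν)
      (0 + 1 * (1 / (4 * Real.cos (ψ/2)^2)) * Bw μ ν) α := by
    have e : (fun s => ra ψ s μ ν)
        = fun s => (rSym μ ν + 1/2 * Real.tan (ψ/2) * Awedge μ ν)
            + s * (1 / (4 * Real.cos (ψ/2)^2)) * Bw μ ν := by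
      funext s
      show rSym μ ν + 1/2 * Real.tan (ψ/2) * Awedge μ ν + (s / (4 * Real.cos (ψ/2)^2)) * Bw μ ν = _
      ring
    rw [e]
    exact (hasDerivAt_const α _).add (((hasDerivAt_id α).mul_const _).mul_const _)
  rw [htot.deriv, DalR]
  rw [one_add_tan_sq' hc]
  field_simp
  ring


/-- r_a(ψ,α) = ½(P_a⊗J^a + J^a⊗P_a) + ½tan(ψ/2)(P₁∧J₂ - P₂∧J₁)
+ (α/(4cos²(ψ/2))) P₁∧P₂ is a classical dynamical r-matrix for h_a = span{J₀,P₀}: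
it is h_a-invariant and satisfies the CDYBE with x₁ = P₀, x₂ = J₀. -/
theorem stmt8 :
    ∀ ψ ∈ Set.Ioo (-(π/2)) (π/2), ∀ α : ℝ,
      (∀ x ∈ Submodule.span ℝ ({Jb 0, Pb 0} : Set iso21), act2 x (ra ψ α) = 0) ∧
      CDYBEat ra (fun _ _ => Pb 0) (fun _ _ => Jb 0) ψ α := by
  intro ψ hψ α
  have hc : Real.cos (ψ/2) ≠ 0 := by
    have hp := Real.pi_pos
    have h1 := hψ.1
    have h2 := hψ.2
    have : 0 < Real.cos (ψ/2) :=
      Real.cos_pos_of_mem_Ioo ⟨by linarith, by linarith⟩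
    linarith
  have hu : α / (4 * (Real.cos (ψ/2))^2) = α * (1 + Real.tan (ψ/2)^2) / 4 := by
    rw [one_add_tan_sq' hc]
    field_simp
  constructor
  · intro x hx
    rw [Submodule.mem_span_pair] at hx
    obtain ⟨a, b, rfl⟩ := hx
    rw [ra_eq]
    exact act2_gen a b _ _
  · intro μ ν lam
    simp only [deriv_psi ψ α hc, deriv_alpha ψ α hc]
    rw [ra_eq, hu]
    exact core (Real.tan (ψ/2)) α μ ν lam
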